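/- Let A be a Laplacian subalgebra of ℝ[x₁,…,x_n] and A_d = A ∩ ℝ[V]_d its degree-d part. Then A_d decomposes as the direct sum over i of A_d ∩ r^{2i}·H_{d−2i}, where H_e denotes the space of harmonic homogeneous polynomials of degree e. Equivalently, each A_d is compatible with the spherical-harmonic decomposition of ℝ[V]_d. -/
import Mathlib

open MvPolynomial

/-- The Laplacian Δ = Σᵢ ∂²/∂xᵢ². -/
noncomputable def lap {n : ℕ} (f : MvPolynomial (Fin n) ℝ) : MvPolynomial (Fin n) ℝ :=
  ∑ i, pderiv i (pderiv i f)

/-- ⟨∇f, ∇g⟩ = Σᵢ (∂f/∂xᵢ)(∂g/∂xᵢ). -/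
noncomputable def gradInner {n : ℕ} (f g : MvPolynomial (Fin n) ℝ) :
    MvPolynomial (Fin n) ℝ :=
  ∑ i, pderiv i f * pderiv i g

/-- r² = x₁² + ⋯ + xₙ². -/
noncomputable def rsq {n : ℕ} : MvPolynomial (Fin n) ℝ := ∑ i, X i ^ 2

variable {n : ℕ}

lemma lap_smul (c : ℝ) (f : MvPolynomial (Fin n) ℝ) : lap (c • f) = c • lap f := by
  simp [lap, Finset.smul_sum]

lemma lap_sub (f g : MvPolynomial (Fin n) ℝ) : lap (f - g) = lap f - lap g := by
  simp [lap, Finset.sum_sub_distrib]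

lemma lap_zero : lap (0 : MvPolynomial (Fin n) ℝ) = 0 := by simp [lap]

lemma lap_sum {ι : Type*} (s : Finset ι) (F : ι → MvPolynomial (Fin n) ℝ) :
    lap (∑ j ∈ s, F j) = ∑ j ∈ s, lap (F j) := by
  unfold lap
  simp_rw [map_sum]
  exact Finset.sum_comm

lemma degree_eq_sum_univ (σ : Fin n →₀ ℕ) : σ.degree = ∑ i, σ i :=
  Finset.sum_subset (Finset.subset_univ _) (by simp)

lemma euler_monomial (σ : Fin n →₀ ℕ) (a : ℝ) :
    ∑ i, X i * pderiv i (monomial σ a) = (σ.degree : ℝ) • monomial σ a := by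
  have key : ∀ i : Fin n, X i * pderiv i (monomial σ a) = monomial σ (a * σ i) := by
    intro i
    rw [pderiv_monomial]
    by_cases h : σ i = 0
    · simp [h]
    · rw [X, monomial_mul, one_mul]
      congr 1
      rw [add_comm, tsub_add_cancel_of_le]
      exact Finsupp.single_le_iff.mpr (Nat.one_le_iff_ne_zero.mpr h)
  rw [Finset.sum_congr rfl fun i _ => key i]
  have : ∀ i : Fin n, (monomial σ) (a * σ i) = (σ i : ℝ) • monomial σ a := by
    intro i; rw [smul_monomial, smul_eq_mul, mul_comm]
  rw [Finset.sum_congr rfl fun i _ => this i, ← Finset.sum_smul]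
  congr 1
  rw [degree_eq_sum_univ]
  push_cast
  rfl

lemma euler {d : ℕ} {f : MvPolynomial (Fin n) ℝ} (hf : f.IsHomogeneous d) :
    ∑ i, X i * pderiv i f = (d : ℝ) • f := by
  conv_lhs => rw [f.as_sum]
  conv_rhs => rw [f.as_sum]
  simp_rw [map_sum, Finset.mul_sum, Finset.smul_sum]
  rw [Finset.sum_comm]
  refine Finset.sum_congr rfl fun σ hσ => ?_
  have h2 : σ.degree = d := by
    rw [Finsupp.degree_eq_weight_one]; exact hf (mem_support_iff.mp hσ)
  rw [euler_monomial, h2]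

lemma pderiv_homog {d : ℕ} {f : MvPolynomial (Fin n) ℝ} (hf : f.IsHomogeneous d) (i : Fin n) :
    (pderiv i f).IsHomogeneous (d - 1) := by
  conv_lhs => rw [f.as_sum]
  rw [map_sum]
  apply IsHomogeneous.sum
  intro σ hσ
  rw [pderiv_monomial]
  by_cases h : σ i = 0
  · simp [h, isHomogeneous_zero]
  · apply isHomogeneous_monomial
    have hd : σ.degree = d := by
      rw [Finsupp.degree_eq_weight_one]; exact hf (mem_support_iff.mp hσ)
    have h1 : (σ - Finsupp.single i 1).degree + 1 = σ.degree := by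
      rw [degree_eq_sum_univ, degree_eq_sum_univ,
        ← Finset.add_sum_erase _ _ (Finset.mem_univ i),
        ← Finset.add_sum_erase _ σ (Finset.mem_univ i)]
      have h2 : ∀ j ∈ Finset.univ.erase i, ((σ - Finsupp.single i 1 : Fin n →₀ ℕ)) j = σ j := by
        intro j hj
        rw [Finsupp.tsub_apply, Finsupp.single_apply,
          if_neg (Finset.ne_of_mem_erase hj).symm, Nat.sub_zero]
      rw [Finset.sum_congr rfl h2, Finsupp.tsub_apply, Finsupp.single_apply, if_pos rfl]
      have he : ∑ x ∈ Finset.univ.erase i, σ x = (Finset.univ.erase i).sum ⇑σ := rfl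
      omega
    omega

lemma pderiv_homog_zero {f : MvPolynomial (Fin n) ℝ} (hf : f.IsHomogeneous 0) (i : Fin n) :
    pderiv i f = 0 := by
  conv_lhs => rw [f.as_sum]
  rw [map_sum]
  apply Finset.sum_eq_zero
  intro σ hσ
  have hd : σ.degree = 0 := by
    rw [Finsupp.degree_eq_weight_one]; exact hf (mem_support_iff.mp hσ)
  rw [Finsupp.degree_eq_zero_iff] at hd
  subst hd
  simp

lemma lap_eq_zero_of_lt_two {d : ℕ} {f : MvPolynomial (Fin n) ℝ} (hf : f.IsHomogeneous d)
    (hd : d < 2) : lap f = 0 := by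
  unfold lap
  apply Finset.sum_eq_zero
  intro i _
  interval_cases d
  · rw [pderiv_homog_zero hf, map_zero]
  · exact pderiv_homog_zero (pderiv_homog hf i) i

lemma rsq_homog : (rsq : MvPolynomial (Fin n) ℝ).IsHomogeneous 2 := by
  apply IsHomogeneous.sum
  intro i _
  simpa using (isHomogeneous_X ℝ i).pow 2

lemma pderiv_rsq (i : Fin n) : pderiv i (rsq : MvPolynomial (Fin n) ℝ) = C 2 * X i := by
  rw [rsq, map_sum, Finset.sum_eq_single i]
  · rw [pderiv_pow, pderiv_X_self]
    rw [map_ofNat]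
    norm_num
  · intro j _ hj
    rw [pderiv_pow, pderiv_X_of_ne hj, mul_zero]
  · intro hi; exact absurd (Finset.mem_univ i) hi

lemma lap_rsq : lap (rsq : MvPolynomial (Fin n) ℝ) = (2 * (n : ℝ)) • 1 := by
  unfold lap
  have key : ∀ i : Fin n, pderiv i (pderiv i (rsq : MvPolynomial (Fin n) ℝ)) = C 2 := by
    intro i
    rw [pderiv_rsq i, pderiv_C_mul, pderiv_X_self, mul_one]
  rw [Finset.sum_congr rfl fun i _ => key i, Finset.sum_const, Finset.card_univ, Fintype.card_fin,
    smul_eq_C_mul, mul_one, nsmul_eq_mul, ← C_eq_coe_nat, ← C_mul, mul_comm]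

lemma lap_mul (f g : MvPolynomial (Fin n) ℝ) :
    lap (f * g) = lap f * g + gradInner f g + gradInner f g + f * lap g := by
  unfold lap gradInner
  have key : ∀ i : Fin n, pderiv i (pderiv i (f * g)) =
      pderiv i (pderiv i f) * g + pderiv i f * pderiv i g + pderiv i f * pderiv i g
        + f * pderiv i (pderiv i g) := by
    intro i
    rw [pderiv_mul, map_add, pderiv_mul, pderiv_mul]
    ring
  rw [Finset.sum_congr rfl fun i _ => key i, Finset.sum_add_distrib, Finset.sum_add_distrib,
    Finset.sum_add_distrib, ← Finset.sum_mul, ← Finset.mul_sum]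

lemma gradInner_rsq {m : ℕ} {p : MvPolynomial (Fin n) ℝ} (hp : p.IsHomogeneous m) :
    gradInner rsq p = (2 * (m : ℝ)) • p := by
  unfold gradInner
  rw [Finset.sum_congr rfl fun i _ => by rw [pderiv_rsq i, mul_assoc]]
  rw [← Finset.mul_sum, euler hp, mul_smul, ← smul_eq_C_mul]


lemma lap_rsq_pow_mul {e : ℕ} {h : MvPolynomial (Fin n) ℝ} (hh : h.IsHomogeneous e)
    (hd : lap h = 0) (i : ℕ) :
    lap (rsq ^ i * h) =
      ((2 * i) * ((n : ℝ) + 2 * e + 2 * i - 2)) • (rsq ^ (i - 1) * h) := by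
  induction i with
  | zero => norm_num [hd]
  | succ i ih =>
    have hp : rsq ^ (i + 1) * h = rsq * (rsq ^ i * h) := by rw [pow_succ]; ring
    rw [hp, lap_mul, lap_rsq, gradInner_rsq ((rsq_homog.pow i).mul hh), ih,
      smul_mul_assoc, one_mul, mul_smul_comm]
    cases i with
    | zero =>
      norm_num
      rw [← add_smul, ← add_smul]
      congr 1
      ring
    | succ j =>
      have hq : rsq * (rsq ^ (j + 1 - 1) * h) = rsq ^ (j + 1) * h := by
        rw [Nat.add_sub_cancel, ← mul_assoc, ← pow_succ']
      rw [hq]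
      rw [← add_smul, ← add_smul, ← add_smul]
      congr 1
      push_cast
      ring


lemma homog_smul {d : ℕ} {f : MvPolynomial (Fin n) ℝ} (hf : f.IsHomogeneous d) (c : ℝ) :
    (c • f).IsHomogeneous d :=
  (homogeneousSubmodule (Fin n) ℝ d).smul_mem c hf

theorem main_aux (A : Subalgebra ℝ (MvPolynomial (Fin n) ℝ))
    (hr : rsq ∈ A) (hΔ : ∀ f ∈ A, lap f ∈ A) :
    ∀ d : ℕ, ∀ f : MvPolynomial (Fin n) ℝ, f ∈ A → f.IsHomogeneous d →
    ∃ h : ℕ → MvPolynomial (Fin n) ℝ,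
      (∀ i ≤ d / 2, (h i).IsHomogeneous (d - 2 * i) ∧ lap (h i) = 0 ∧
        rsq ^ i * h i ∈ A) ∧
      f = ∑ i ∈ Finset.range (d / 2 + 1), rsq ^ i * h i := by
  intro d
  induction d using Nat.strong_induction_on with
  | _ d IH =>
  intro f hfA hf
  by_cases hd2 : d < 2
  · refine ⟨fun _ => f, ?_, ?_⟩
    · intro i hi
      have hd0 : d / 2 = 0 := by omega
      have hi0 : i = 0 := by omega
      subst hi0
      exact ⟨by simpa using hf, lap_eq_zero_of_lt_two hf hd2, by simpa using hfA⟩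
    · have hd0 : d / 2 = 0 := by omega
      rw [hd0]
      simp
  push_neg at hd2
  by_cases hn : n = 0
  · have hf0 : f = 0 := by
      by_contra h0
      subst hn
      have ht := hf.totalDegree h0
      have h1 : f.totalDegree = 0 := by
        rw [totalDegree_eq_zero_iff]
        intro m _ x
        exact x.elim0
      omega
    subst hf0
    refine ⟨fun _ => 0, fun i hi => ⟨isHomogeneous_zero _ _ _, lap_zero, by simpa using A.zero_mem⟩,
      by simp⟩
  -- main case
  have hn1 : 1 ≤ n := by omega
  obtain ⟨g, hg, hfg⟩ := IH (d - 2) (by omega) (lap f) (hΔ f hfA) (by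
    have h1 : ∀ i : Fin n, (pderiv i (pderiv i f)).IsHomogeneous (d - 2) := by
      intro i
      have := pderiv_homog (pderiv_homog hf i) i
      have e : d - 1 - 1 = d - 2 := by omega
      rwa [e] at this
    exact IsHomogeneous.sum _ _ _ fun i _ => h1 i)
  set c : ℕ → ℝ := fun i => (2 * (i:ℕ)) * ((n : ℝ) + 2 * ((d - 2 * i : ℕ) : ℝ) + 2 * (i:ℕ) - 2)
    with hcdef
  have hcne : ∀ i, 1 ≤ i → i ≤ d / 2 → c i ≠ 0 := by
    intro i h1 h2
    have hi1 : (1:ℝ) ≤ (i:ℝ) := by exact_mod_cast h1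
    have hn1' : (1:ℝ) ≤ (n:ℝ) := by exact_mod_cast hn1
    have h0 : (0:ℝ) ≤ ((d - 2*i : ℕ) : ℝ) := Nat.cast_nonneg _
    have hpos : (0:ℝ) < c i := by
      have e : c i = (2 * (i:ℕ)) * ((n : ℝ) + 2 * ((d - 2 * i : ℕ) : ℝ) + 2 * (i:ℕ) - 2) := rfl
      rw [e]
      nlinarith
    exact hpos.ne'
  set h' : ℕ → MvPolynomial (Fin n) ℝ := fun i => (c i)⁻¹ • g (i - 1) with hh'def
  set S : MvPolynomial (Fin n) ℝ := ∑ j ∈ Finset.Ico 1 (d / 2 + 1), rsq ^ j * h' j with hSdef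
  -- facts about h' i for i in Ico
  have hIco : ∀ i ∈ Finset.Ico 1 (d / 2 + 1), 1 ≤ i ∧ i ≤ d / 2 := by
    intro i hi
    rw [Finset.mem_Ico] at hi
    omega
  have hghom : ∀ i, 1 ≤ i → i ≤ d / 2 → (g (i-1)).IsHomogeneous (d - 2 * i) := by
    intro i h1 h2
    have := (hg (i-1) (by omega)).1
    have e : d - 2 - 2 * (i - 1) = d - 2 * i := by omega
    rwa [e] at this
  have hh'hom : ∀ i, 1 ≤ i → i ≤ d / 2 → (h' i).IsHomogeneous (d - 2 * i) := by
    intro i h1 h2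
    exact homog_smul (hghom i h1 h2) _
  have hkey : ∀ i, 1 ≤ i → i ≤ d / 2 →
      lap (rsq ^ i * h' i) = rsq ^ (i - 1) * g (i - 1) := by
    intro i h1 h2
    have e0 : h' i = (c i)⁻¹ • g (i - 1) := rfl
    rw [e0, mul_smul_comm, lap_smul,
      lap_rsq_pow_mul (hghom i h1 h2) (hg (i-1) (by omega)).2.1 i, smul_smul,
      inv_mul_cancel₀ (hcne i h1 h2), one_smul]
  have hmem : ∀ i, 1 ≤ i → i ≤ d / 2 → rsq ^ i * h' i ∈ A := by
    intro i h1 h2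
    have e0 : h' i = (c i)⁻¹ • g (i - 1) := rfl
    rw [e0, mul_smul_comm]
    apply A.smul_mem
    have e : i = (i - 1) + 1 := by omega
    rw [e, pow_succ', mul_assoc]
    exact A.mul_mem hr (hg (i-1) (by omega)).2.2
  have hlapS : lap S = lap f := by
    rw [hSdef, lap_sum, Finset.sum_congr rfl (fun i hi => hkey i (hIco i hi).1 (hIco i hi).2)]
    rw [Finset.sum_Ico_eq_sum_range]
    have e1 : d / 2 + 1 - 1 = (d - 2) / 2 + 1 := by omega
    rw [e1, hfg]
    apply Finset.sum_congr rfl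
    intro j _
    have e : 1 + j - 1 = j := by omega
    rw [e]
  have hShom : S.IsHomogeneous d := by
    rw [hSdef]
    apply IsHomogeneous.sum
    intro j hj
    obtain ⟨hj1, hj2⟩ := hIco j hj
    have := (rsq_homog.pow j).mul (hh'hom j hj1 hj2)
    have e : 2 * j + (d - 2 * j) = d := by omega
    rwa [e] at this
  have hSmem : S ∈ A := A.sum_mem fun j hj => hmem j (hIco j hj).1 (hIco j hj).2
  refine ⟨fun i => Nat.rec (motive := fun _ => MvPolynomial (Fin n) ℝ)
      (f - S) (fun k _ => h' (k + 1)) i, ?_, ?_⟩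
  · intro i hi
    cases i with
    | zero =>
      refine ⟨?_, ?_, ?_⟩
      · exact hf.sub hShom
      · show lap (f - S) = 0
        rw [lap_sub, hlapS, sub_self]
      · show rsq ^ 0 * (f - S) ∈ A
        rw [pow_zero, one_mul]
        exact A.sub_mem hfA hSmem
    | succ k =>
      have h1 : 1 ≤ k + 1 := by omega
      exact ⟨hh'hom (k+1) h1 hi, by
          show lap (h' (k+1)) = 0
          have e : h' (k+1) = (c (k+1))⁻¹ • g k := rfl
          rw [e, lap_smul, (hg k (by omega)).2.1, smul_zero],
        hmem (k+1) h1 hi⟩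
  · rw [Finset.range_eq_Ico, Finset.sum_eq_sum_Ico_succ_bot (by omega : 0 < d / 2 + 1)]
    have e2 : ∀ j ∈ Finset.Ico 1 (d / 2 + 1),
        rsq ^ j * (Nat.rec (motive := fun _ => MvPolynomial (Fin n) ℝ)
          (f - S) (fun k _ => h' (k + 1)) j) = rsq ^ j * h' j := by
      intro j hj
      obtain ⟨k, rfl⟩ : ∃ k, j = k + 1 := ⟨j - 1, by have := hIco j hj; omega⟩
      rfl
    rw [Finset.sum_congr rfl e2, ← hSdef]
    show f = rsq ^ 0 * (f - S) + S
    rw [pow_zero, one_mul]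
    ring

/-- The degree-d part of a Laplacian algebra is compatible with the
spherical-harmonic decomposition: every homogeneous f ∈ A of degree d is a sum
f = Σᵢ r^{2i} hᵢ with hᵢ harmonic homogeneous of degree d-2i and r^{2i} hᵢ ∈ A. -/
theorem laplacian_algebra_harmonic_decomposition {n : ℕ}
    (A : Subalgebra ℝ (MvPolynomial (Fin n) ℝ))
    (hr : rsq ∈ A) (hΔ : ∀ f ∈ A, lap f ∈ A)
    (d : ℕ) (f : MvPolynomial (Fin n) ℝ) (hfA : f ∈ A) (hf : f.IsHomogeneous d) :
    ∃ h : ℕ → MvPolynomial (Fin n) ℝ,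
      (∀ i ≤ d / 2, (h i).IsHomogeneous (d - 2 * i) ∧ lap (h i) = 0 ∧
        rsq ^ i * h i ∈ A) ∧
      f = ∑ i ∈ Finset.range (d / 2 + 1), rsq ^ i * h i := by
  exact main_aux A hr hΔ d f hfA hf
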